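/- Let 0 < α < β and let f : (0,∞) → ℝ be given by f(x) = ln( β(x+α) / (α(x+β)) ). Then for every integer n ≥ 2 and all pairwise distinct x_1, …, x_n ∈ (0,∞), one has 0 < −Σ_{i=1}^n f(x_i) / Π_{j≠i} (x_j − x_i) < (1/(n−1)) (1/α^(n−1) − 1/β^(n−1)). -/

import Mathlib

open Finset Polynomial

lemma lag_eval (n : ℕ) (hn : 1 ≤ n) (x : Fin n → ℝ) (hinj : Function.Injective x) (t : ℝ) :
    ∑ i, ∏ j ∈ univ.erase i, ((x j + t) * (x j - x i)⁻¹) = 1 := by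
  have hInj : Set.InjOn x ↑(univ : Finset (Fin n)) := hinj.injOn
  have hne : (univ : Finset (Fin n)).Nonempty := ⟨⟨0, by omega⟩, mem_univ _⟩
  have h := Lagrange.sum_basis hInj hne
  have h2 := congrArg (Polynomial.eval (-t)) h
  simp only [eval_finset_sum, eval_one] at h2
  rw [← h2]
  refine sum_congr rfl fun i _ => ?_
  rw [Lagrange.basis, eval_prod]
  refine prod_congr rfl fun j hj => ?_
  have hij : x i ≠ x j := fun hc => (mem_erase.mp hj).1 (hinj hc).symm
  have h1 : x i - x j ≠ 0 := sub_ne_zero.mpr hij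
  have h2' : x j - x i ≠ 0 := sub_ne_zero.mpr (Ne.symm hij)
  rw [Lagrange.basisDivisor]
  simp only [eval_mul, eval_C, eval_sub, eval_X]
  field_simp
  ring

lemma pf_identity (n : ℕ) (hn : 1 ≤ n) (x : Fin n → ℝ) (hinj : Function.Injective x) (t : ℝ)
    (ht : ∀ i, 0 < x i + t) :
    ∑ i, ((x i + t) * ∏ j ∈ univ.erase i, (x j - x i))⁻¹ = (∏ i, (x i + t))⁻¹ := by
  have h := lag_eval n hn x hinj t
  have hD : ∀ i, (∏ j ∈ univ.erase i, (x j - x i)) ≠ 0 := by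
    intro i
    exact prod_ne_zero_iff.mpr fun j hj => sub_ne_zero.mpr fun hc => (mem_erase.mp hj).1 (hinj hc)
  calc ∑ i, ((x i + t) * ∏ j ∈ univ.erase i, (x j - x i))⁻¹
      = ∑ i, (∏ i, (x i + t))⁻¹ * ∏ j ∈ univ.erase i, ((x j + t) * (x j - x i)⁻¹) := by
        refine sum_congr rfl fun i _ => ?_
        rw [prod_mul_distrib, ← Finset.mul_prod_erase univ (fun j => x j + t) (mem_univ i)]
        have hE : (∏ j ∈ univ.erase i, (x j + t)) ≠ 0 :=
          prod_ne_zero_iff.mpr fun j _ => (ht j).ne'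
        have hDi := hD i
        have hxi := (ht i).ne'
        rw [prod_inv_distrib]
        field_simp
    _ = (∏ i, (x i + t))⁻¹ := by rw [← mul_sum, h, mul_one]
open Finset Polynomial

lemma sum_inv_D_zero (n : ℕ) (hn : 2 ≤ n) (x : Fin n → ℝ) (hinj : Function.Injective x) :
    ∑ i, (∏ j ∈ univ.erase i, (x j - x i))⁻¹ = 0 := by
  have hInj : Set.InjOn x ↑(univ : Finset (Fin n)) := hinj.injOn
  have hne : (univ : Finset (Fin n)).Nonempty := ⟨⟨0, by omega⟩, mem_univ _⟩
  have h := Lagrange.sum_basis hInj hne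
  have h2 := congrArg (fun p => Polynomial.coeff p (n - 1)) h
  simp only [finset_sum_coeff] at h2
  have hco : (1 : ℝ[X]).coeff (n - 1) = 0 := by
    rw [Polynomial.coeff_one]
    simp only [ite_eq_right_iff]
    intro hc; omega
  have hlc : ∀ i, (Lagrange.basis univ x i).coeff (n - 1)
      = ∏ j ∈ univ.erase i, (x i - x j)⁻¹ := by
    intro i
    have hdeg : (Lagrange.basis univ x i).natDegree = n - 1 := by
      rw [Lagrange.natDegree_basis hInj (mem_univ i), card_univ, Fintype.card_fin]
    rw [← hdeg, Polynomial.coeff_natDegree, Lagrange.basis, Polynomial.leadingCoeff_prod]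
    refine prod_congr rfl fun j hj => ?_
    rw [Lagrange.basisDivisor, Polynomial.leadingCoeff_mul, Polynomial.leadingCoeff_C,
      (Polynomial.monic_X_sub_C (x j)).leadingCoeff, mul_one]
  have key : ∑ i, ∏ j ∈ univ.erase i, (x i - x j)⁻¹ = 0 := by
    rw [← hco, ← h2]
    exact sum_congr rfl fun i _ => (hlc i).symm
  have hcard : ∀ i : Fin n, #(univ.erase i) = n - 1 := fun i => by
    rw [card_erase_of_mem (mem_univ i), card_univ, Fintype.card_fin]
  calc ∑ i, (∏ j ∈ univ.erase i, (x j - x i))⁻¹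
      = ∑ i, (-1 : ℝ) ^ (n - 1) * ∏ j ∈ univ.erase i, (x i - x j)⁻¹ := by
        refine sum_congr rfl fun i _ => ?_
        rw [prod_inv_distrib]
        have hp : ∏ j ∈ univ.erase i, (x j - x i)
            = (-1:ℝ)^(n-1) * ∏ j ∈ univ.erase i, (x i - x j) := by
          rw [← hcard i, ← prod_const (-1 : ℝ), ← prod_mul_distrib]
          exact prod_congr rfl fun j _ => by ring
        rw [hp, mul_inv, ← inv_pow, inv_neg, inv_one]
    _ = 0 := by rw [← mul_sum, key, mul_zero]
open Finset intervalIntegral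

lemma integrable_inv_shift {α β y : ℝ} (hα : 0 < α) (hαβ : α < β) (hy : 0 ≤ y) :
    IntervalIntegrable (fun t => (y + t)⁻¹) MeasureTheory.volume α β := by
  apply ContinuousOn.intervalIntegrable
  apply ContinuousOn.inv₀
  · exact (continuous_const.add continuous_id).continuousOn
  · intro t ht
    rw [Set.uIcc_of_le hαβ.le] at ht
    have : 0 < t := lt_of_lt_of_le hα ht.1
    positivity

lemma f_eq_integral {α β : ℝ} (hα : 0 < α) (hαβ : α < β) (y : ℝ) (hy : 0 < y) :
    Real.log (β * (y + α) / (α * (y + β))) = ∫ t in α..β, (t⁻¹ - (y + t)⁻¹) := by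
  have hβ : (0:ℝ) < β := hα.trans hαβ
  have h1 : ∫ t in α..β, t⁻¹ = Real.log (β / α) := integral_inv_of_pos hα hβ
  have h2 : ∫ t in α..β, (y + t)⁻¹ = Real.log ((β + y) / (α + y)) := by
    have := intervalIntegral.integral_comp_add_right (a := α) (b := β) (fun s => s⁻¹) y
    rw [integral_inv_of_pos (by positivity) (by positivity)] at this
    rw [← this]
    simp [add_comm]
  rw [intervalIntegral.integral_sub (integrable_inv_shift hα hαβ le_rfl |>.congr ?_ ) (integrable_inv_shift hα hαβ hy.le), h1, h2]
  · rw [Real.log_div (by positivity) (by positivity), Real.log_div (by positivity) (by positivity),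
      Real.log_mul (by positivity) (by positivity), Real.log_mul (by positivity) (by positivity),
      Real.log_div (by positivity) (by positivity), add_comm y α, add_comm y β]
    ring
  · intro t _
    simp

theorem log_ratio_divided_difference_bounds (α β : ℝ) (hα : 0 < α) (hαβ : α < β)
    (f : ℝ → ℝ) (hfdef : ∀ x ∈ Set.Ioi (0 : ℝ), f x = Real.log (β * (x + α) / (α * (x + β))))
    (n : ℕ) (hn : 2 ≤ n) (x : Fin n → ℝ) (hx : ∀ i, x i ∈ Set.Ioi (0 : ℝ))
    (hinj : Function.Injective x) :
    0 < -∑ i, f (x i) / ∏ j ∈ Finset.univ.erase i, (x j - x i) ∧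
    -∑ i, f (x i) / ∏ j ∈ Finset.univ.erase i, (x j - x i) <
      (1 / (n - 1 : ℝ)) * (1 / α ^ (n - 1) - 1 / β ^ (n - 1)) := by
  have hβ : (0:ℝ) < β := hα.trans hαβ
  have hxpos : ∀ i, 0 < x i := fun i => hx i
  have huIcc : Set.uIcc α β = Set.Icc α β := Set.uIcc_of_le hαβ.le
  -- continuity helpers
  have hcontP : ContinuousOn (fun t : ℝ => (∏ i, (x i + t))⁻¹) (Set.uIcc α β) := by
    apply ContinuousOn.inv₀
    · exact (continuous_finset_prod _ fun i _ => continuous_const.add continuous_id).continuousOn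
    · intro t ht
      rw [huIcc] at ht
      have htpos : 0 < t := lt_of_lt_of_le hα ht.1
      exact (Finset.prod_pos fun i _ => add_pos (hxpos i) htpos).ne'
  have hintP : IntervalIntegrable (fun t : ℝ => (∏ i, (x i + t))⁻¹)
      MeasureTheory.volume α β := hcontP.intervalIntegrable
  have hcontz : ContinuousOn (fun t : ℝ => t ^ (-(n:ℤ))) (Set.uIcc α β) := by
    apply ContinuousOn.zpow₀ continuousOn_id
    intro t ht
    rw [huIcc] at ht
    exact Or.inl (lt_of_lt_of_le hα ht.1).ne'
  have hintz : IntervalIntegrable (fun t : ℝ => t ^ (-(n:ℤ)))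
      MeasureTheory.volume α β := hcontz.intervalIntegrable
  -- Step 1 : rewrite the sum as an integral
  have hstep : ∑ i, f (x i) / ∏ j ∈ Finset.univ.erase i, (x j - x i)
      = -∫ t in α..β, (∏ i, (x i + t))⁻¹ := by
    have hfe : ∀ i, f (x i) = ∫ t in α..β, (t⁻¹ - (x i + t)⁻¹) := fun i => by
      rw [hfdef (x i) (hx i)]; exact f_eq_integral hα hαβ (x i) (hxpos i)
    calc ∑ i, f (x i) / ∏ j ∈ Finset.univ.erase i, (x j - x i)
        = ∑ i, ∫ t in α..β,
            (t⁻¹ - (x i + t)⁻¹) * (∏ j ∈ Finset.univ.erase i, (x j - x i))⁻¹ := by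
          refine sum_congr rfl fun i _ => ?_
          rw [hfe i, div_eq_mul_inv, ← intervalIntegral.integral_mul_const]
      _ = ∫ t in α..β, ∑ i,
            (t⁻¹ - (x i + t)⁻¹) * (∏ j ∈ Finset.univ.erase i, (x j - x i))⁻¹ := by
          rw [intervalIntegral.integral_finset_sum]
          intro i _
          apply ContinuousOn.intervalIntegrable
          apply ContinuousOn.mul _ continuousOn_const
          apply ContinuousOn.sub
          · apply ContinuousOn.inv₀ continuousOn_id
            intro t ht
            rw [huIcc] at ht
            exact (lt_of_lt_of_le hα ht.1).ne'
          · apply ContinuousOn.inv₀ (continuous_const.add continuous_id).continuousOn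
            intro t ht
            rw [huIcc] at ht
            exact (add_pos (hxpos i) (lt_of_lt_of_le hα ht.1)).ne'
      _ = ∫ t in α..β, -(∏ i, (x i + t))⁻¹ := by
          apply intervalIntegral.integral_congr
          intro t ht
          rw [huIcc] at ht
          have htpos : 0 < t := lt_of_lt_of_le hα ht.1
          have hP : ∀ i, 0 < x i + t := fun i => add_pos (hxpos i) htpos
          have e1 : ∀ i ∈ (univ : Finset (Fin n)),
              (t⁻¹ - (x i + t)⁻¹) * (∏ j ∈ Finset.univ.erase i, (x j - x i))⁻¹
              = t⁻¹ * (∏ j ∈ Finset.univ.erase i, (x j - x i))⁻¹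
                - ((x i + t) * ∏ j ∈ Finset.univ.erase i, (x j - x i))⁻¹ := fun i _ => by
            rw [mul_inv]; ring
          simp only
          rw [sum_congr rfl e1, sum_sub_distrib, ← mul_sum,
            sum_inv_D_zero n hn x hinj, pf_identity n (by omega) x hinj t hP,
            mul_zero, zero_sub]
      _ = -∫ t in α..β, (∏ i, (x i + t))⁻¹ := intervalIntegral.integral_neg
  rw [hstep, neg_neg]
  constructor
  · -- positivity
    apply intervalIntegral.intervalIntegral_pos_of_pos_on hintP _ hαβ
    intro t ht
    have htpos : 0 < t := hα.trans ht.1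
    exact inv_pos.mpr (Finset.prod_pos fun i _ => add_pos (hxpos i) htpos)
  · -- upper bound
    have hne : (univ : Finset (Fin n)).Nonempty := ⟨⟨0, by omega⟩, mem_univ _⟩
    have hlt : 0 < ∫ t in α..β, (t ^ (-(n:ℤ)) - (∏ i, (x i + t))⁻¹) := by
      apply intervalIntegral.intervalIntegral_pos_of_pos_on (hintz.sub hintP) _ hαβ
      intro t ht
      have htpos : 0 < t := hα.trans ht.1
      have hprod : t ^ n < ∏ i, (x i + t) := by
        have : ∏ _i ∈ (univ : Finset (Fin n)), t = t ^ n := by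
          rw [prod_const, card_univ, Fintype.card_fin]
        rw [← this]
        exact Finset.prod_lt_prod_of_nonempty (fun i _ => htpos)
          (fun i _ => by linarith [hxpos i]) hne
      have h2 : (∏ i, (x i + t))⁻¹ < (t ^ n)⁻¹ := by
        apply inv_strictAnti₀ (by positivity) hprod
      have h3 : (t : ℝ) ^ (-(n:ℤ)) = (t ^ n)⁻¹ := by
        rw [zpow_neg, zpow_natCast]
      rw [h3]; linarith
    rw [intervalIntegral.integral_sub hintz hintP] at hlt
    have hzval : ∫ t in α..β, (t:ℝ) ^ (-(n:ℤ))
        = (1 / (n - 1 : ℝ)) * (1 / α ^ (n - 1) - 1 / β ^ (n - 1)) := by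
      have hne1 : (-(n:ℤ)) ≠ -1 := by omega
      have h0 : (0:ℝ) ∉ Set.uIcc α β := by
        rw [huIcc]
        exact fun hc => absurd hc.1 (not_le.mpr hα)
      rw [integral_zpow (Or.inr ⟨hne1, h0⟩)]
      have hm : (-(n:ℤ)) + 1 = -((n - 1 : ℕ) : ℤ) := by
        have : (1:ℤ) ≤ (n:ℤ) := by omega
        push_cast [Nat.cast_sub (by omega : 1 ≤ n)]
        ring
      have hcast : ((n - 1 : ℕ) : ℝ) = (n : ℝ) - 1 := by
        push_cast [Nat.cast_sub (by omega : 1 ≤ n)]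
        ring
      rw [hm, zpow_neg, zpow_neg, zpow_natCast, zpow_natCast]
      have hmm : ((-(n:ℤ)) + 1 : ℝ) = -(((n-1:ℕ)):ℝ) := by
        push_cast [Nat.cast_sub (by omega : 1 ≤ n)]
        ring
      have hmne : ((n - 1 : ℕ) : ℝ) ≠ 0 := by
        rw [hcast]
        have : (2:ℝ) ≤ (n:ℝ) := by exact_mod_cast hn
        linarith
      push_cast
      have hd : (-(n:ℝ) + 1) ≠ 0 := by
        have : (2:ℝ) ≤ (n:ℝ) := by exact_mod_cast hn
        linarith
      simp only [one_div]
      rw [show (-(n:ℝ) + 1) = -((n:ℝ) - 1) by ring, div_neg, ← neg_div, neg_sub,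
        div_eq_inv_mul]
    linarith
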